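/- Let φ = (x−γ)² − c₁ ∈ 𝔽̄_p[t][x] with c₁ ≠ 0, c₁ not a square in 𝔽̄_p[t], and deg(γ+c₁) > 0 (p odd). Fix n ≥ 3 with deg(γ+c₁)·2^{n−3} > max{deg γ, deg c₁}, set α₁ = γ − √c₁, α₂ = γ + √c₁ (in a quadratic extension K = 𝔽̄_p(t, √c₁)), and ξᵢ = √(c_{n−1} − αᵢ). Then neither ξ₁ nor ξ₂ lies in K. -/

import Mathlib

open Polynomial

/-- Elements of `F⟮s⟯` where `s² ∈ F` have the form `a + b·s`. -/
lemma aux_mem_adjoin_sq {F Ω : Type*} [Field F] [Field Ω] [Algebra F Ω]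
    (s : Ω) (d : F) (hs : s ^ 2 = algebraMap F Ω d)
    {x : Ω} (hx : x ∈ IntermediateField.adjoin F {s}) :
    ∃ a b : F, x = algebraMap F Ω a + algebraMap F Ω b * s := by
  set m : Polynomial F := X ^ 2 - C d with hm
  have hmonic : m.Monic := monic_X_pow_sub_C d two_ne_zero
  have hms : aeval s m = 0 := by simp [hm, hs]
  have hint : IsIntegral F s := ⟨m, hmonic, by simpa [aeval_def] using hms⟩
  have h1 : x ∈ Algebra.adjoin F {s} := by
    rw [← IntermediateField.adjoin_simple_toSubalgebra_of_isAlgebraic hint.isAlgebraic]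
    exact hx
  rw [Algebra.adjoin_singleton_eq_range_aeval] at h1
  obtain ⟨P, hP⟩ := h1
  have hx2 : aeval s (P %ₘ m) = x := by
    conv_rhs => rw [← hP, ← modByMonic_add_div P m]
    simp [hms]
  have hdeg : (P %ₘ m).degree ≤ 1 := by
    have h2 := degree_modByMonic_lt P hmonic
    have hdm : m.degree = 2 := by
      rw [hm]
      simpa using degree_X_pow_sub_C (by norm_num : 0 < 2) d
    rw [hdm] at h2
    exact Order.le_of_lt_succ (by exact_mod_cast h2)
  refine ⟨(P %ₘ m).coeff 0, (P %ₘ m).coeff 1, ?_⟩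
  conv_lhs => rw [← hx2, eq_X_add_C_of_degree_le_one hdeg]
  simp only [map_add, map_mul, aeval_C, aeval_X]
  ring

/-- A polynomial that is not a square in `K[t]` is not a square in `K(t)`. -/
lemma aux_not_square_ratfunc {K : Type*} [Field K] {q : Polynomial K}
    (h : ¬ ∃ y : Polynomial K, y ^ 2 = q) :
    ¬ ∃ x : RatFunc K, x ^ 2 = algebraMap (Polynomial K) (RatFunc K) q := by
  rintro ⟨x, hx⟩
  have hint : IsIntegral (Polynomial K) x :=
    ⟨X ^ 2 - C q, monic_X_pow_sub_C q two_ne_zero, by simp [hx]⟩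
  obtain ⟨y, hy⟩ := IsIntegrallyClosed.isIntegral_iff.mp hint
  refine h ⟨y, IsFractionRing.injective (Polynomial K) (RatFunc K) ?_⟩
  rw [map_pow, hy, hx]

/-- The adjusted post-critical orbit `c n` satisfies the recursion and is not a
square in the polynomial ring, under the degree hypothesis. -/
lemma aux_nonsquare {K : Type*} [Field K] (h2 : (2 : K) ≠ 0)
    (γ c₁ : Polynomial K) (hc₁ : c₁ ≠ 0) (hiso : 0 < (γ + c₁).natDegree)
    (c : ℕ → Polynomial K)
    (hcn : ∀ m, 2 ≤ m → c m = (fun x => (x - γ) ^ 2 - c₁)^[m] γ)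
    (n : ℕ) (hn : 3 ≤ n)
    (hbig : max γ.natDegree c₁.natDegree < (γ + c₁).natDegree * 2 ^ (n - 3)) :
    c n = (c (n - 1) - γ) ^ 2 - c₁ ∧ ¬ ∃ y : Polynomial K, y ^ 2 = c n := by
  set f : Polynomial K → Polynomial K := fun x => (x - γ) ^ 2 - c₁ with hf
  have hE : ∀ k : ℕ, (f^[k+1] γ - γ).natDegree = (γ + c₁).natDegree * 2 ^ k := by
    intro k
    induction k with
    | zero =>
      rw [Function.iterate_one]
      have h1 : f γ = -c₁ := by rw [hf]; simp
      rw [h1, show -c₁ - γ = -(γ + c₁) by ring, natDegree_neg, pow_zero, mul_one]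
    | succ k ih =>
      have hstep : f^[k+1+1] γ - γ = (f^[k+1] γ - γ) ^ 2 - (γ + c₁) := by
        rw [Function.iterate_succ_apply' f (k+1)]
        simp only [hf]
        ring
      have hlt : (γ + c₁).natDegree < ((f^[k+1] γ - γ) ^ 2).natDegree := by
        rw [natDegree_pow, ih]
        have h1 : 1 ≤ 2 ^ k := Nat.one_le_two_pow
        nlinarith [hiso]
      rw [hstep, natDegree_sub_eq_left_of_natDegree_lt hlt, natDegree_pow, ih, pow_succ]
      ring
  have hcnval : c n = (c (n-1) - γ) ^ 2 - c₁ := by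
    rw [hcn n (by omega), hcn (n-1) (by omega)]
    have h1 : n = (n-1) + 1 := by omega
    conv_lhs => rw [h1, Function.iterate_succ_apply' f (n-1)]
  refine ⟨hcnval, ?_⟩
  set e : Polynomial K := c (n-1) - γ with he
  set D : ℕ := (γ + c₁).natDegree * 2 ^ (n-3) with hD
  have hEdeg : e.natDegree = D * 2 := by
    rw [he, hcn (n-1) (by omega)]
    have h1 : n - 1 = (n - 3 + 1) + 1 := by omega
    rw [h1, hE (n-3+1), hD, pow_succ]
    ring
  rintro ⟨y, hy⟩
  have hfact : (e - y) * (e + y) = c₁ := by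
    have h1 : c₁ = e ^ 2 - y ^ 2 := by linear_combination hcnval + hy
    rw [h1]; ring
  have hd1 : (e - y) ∣ c₁ := ⟨e + y, hfact.symm⟩
  have hd2 : (e + y) ∣ c₁ := ⟨e - y, by rw [mul_comm]; exact hfact.symm⟩
  have l1 := natDegree_le_of_dvd hd1 hc₁
  have l2 := natDegree_le_of_dvd hd2 hc₁
  have hsum : (e - y) + (e + y) = C 2 * e := by
    rw [(map_ofNat C 2 : C (2:K) = 2)]; ring
  have hbig' : ((e - y) + (e + y)).natDegree ≤ c₁.natDegree :=
    le_trans (natDegree_add_le _ _) (by simp [l1, l2])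
  rw [hsum, natDegree_C_mul h2, hEdeg] at hbig'
  have hc₁D : c₁.natDegree < D := lt_of_le_of_lt (le_max_right _ _) hbig
  omega

/-- The key field-theoretic step: if `s² = c₁F` with `c₁F` not a square in `F` and
`A² - c₁F` not a square in `F`, then no square root of `A ± s` lies in `F(s)`. -/
lemma aux_adjoin_arg {F Ω : Type*} [Field F] [Field Ω] [Algebra F Ω]
    (c₁F A : F)
    (h1 : ¬ ∃ x : F, x ^ 2 = c₁F)
    (h2 : ¬ ∃ x : F, x ^ 2 = A ^ 2 - c₁F)
    (s : Ω) (hs : s ^ 2 = algebraMap F Ω c₁F)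
    (ξ : Ω) (ε : F) (hε : ε ^ 2 = 1)
    (hξ : ξ ^ 2 = algebraMap F Ω A + algebraMap F Ω ε * s) :
    ξ ∉ IntermediateField.adjoin F {s} := by
  intro hmem
  set σ : F →+* Ω := algebraMap F Ω with hσ
  have hinj : Function.Injective σ := σ.injective
  have hsnot : ∀ w : F, σ w ≠ s := by
    intro w hw
    refine h1 ⟨w, hinj ?_⟩
    rw [map_pow, hw, hs]
  obtain ⟨a, b, rfl⟩ := aux_mem_adjoin_sq s c₁F hs hmem
  have hexp : σ (a ^ 2 + b ^ 2 * c₁F) + σ (2 * a * b) * s = σ A + σ ε * s := by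
    rw [← hξ]
    have hcalc : (σ a + σ b * s) ^ 2
        = σ (a ^ 2) + σ (b ^ 2) * s ^ 2 + σ (2 * a * b) * s := by
      simp only [map_mul, map_pow, map_ofNat]
      ring
    rw [hcalc, hs]
    simp only [map_add, map_mul]
  by_cases hab : 2 * a * b = ε
  · have hA' : σ (a ^ 2 + b ^ 2 * c₁F) = σ A := by
      rw [hab] at hexp
      exact add_right_cancel hexp
    have hAeq : A = a ^ 2 + b ^ 2 * c₁F := (hinj hA').symm
    have hε2 : (2 * a * b) ^ 2 = 1 := by rw [hab]; exact hε
    refine h2 ⟨a ^ 2 - b ^ 2 * c₁F, ?_⟩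
    rw [hAeq]
    linear_combination (- c₁F) * hε2
  · have hne : σ (ε - 2 * a * b) ≠ 0 := by
      intro h0
      have h0' : ε - 2 * a * b = 0 := hinj (h0.trans (map_zero σ).symm)
      exact hab (sub_eq_zero.mp h0').symm
    refine hsnot ((a ^ 2 + b ^ 2 * c₁F - A) / (ε - 2 * a * b)) ?_
    rw [map_div₀, div_eq_iff hne, map_sub, map_sub]
    linear_combination hexp

/-- Let `φ = (x - γ)² - c₁ ∈ 𝔽̄_p[t][x]` (p odd) with `c₁ ≠ 0`, `c₁` not a
square in `𝔽̄_p[t]`, and `deg (γ + c₁) > 0`.  Fix `n ≥ 3` with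
`deg (γ + c₁) · 2^(n-3) > max (deg γ) (deg c₁)`, set `α₁ = γ - √c₁`, `α₂ = γ + √c₁` (inside
`K = 𝔽̄_p(t, √c₁)` sitting in an algebraic closure `Ω` of `𝔽̄_p(t)`), and let
`ξᵢ = √(c_{n-1} - αᵢ) ∈ Ω`.  Then neither `ξ₁` nor `ξ₂` lies in `K`. -/
theorem stmt_4 (p : ℕ) [Fact p.Prime] (hodd : p ≠ 2)
    (γ c₁ : Polynomial (AlgebraicClosure (ZMod p)))
    (hc₁ : c₁ ≠ 0)
    (hnsq : ¬ ∃ y : Polynomial (AlgebraicClosure (ZMod p)), y ^ 2 = c₁)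
    (hiso : 0 < (γ + c₁).natDegree)
    (c : ℕ → Polynomial (AlgebraicClosure (ZMod p)))
    (hc1 : c 1 = c₁)
    (hcn : ∀ m, 2 ≤ m → c m = (fun x => (x - γ) ^ 2 - c₁)^[m] γ)
    (n : ℕ) (hn : 3 ≤ n)
    (hbig : max γ.natDegree c₁.natDegree < (γ + c₁).natDegree * 2 ^ (n - 3))
    -- the embedding 𝔽̄_p[t] → 𝔽̄_p(t) → Ω
    (j : Polynomial (AlgebraicClosure (ZMod p)) →+*
      AlgebraicClosure (RatFunc (AlgebraicClosure (ZMod p))))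
    (hj : j = (algebraMap (RatFunc (AlgebraicClosure (ZMod p)))
        (AlgebraicClosure (RatFunc (AlgebraicClosure (ZMod p))))).comp
      (algebraMap (Polynomial (AlgebraicClosure (ZMod p)))
        (RatFunc (AlgebraicClosure (ZMod p)))))
    (s : AlgebraicClosure (RatFunc (AlgebraicClosure (ZMod p))))
    (hs : s ^ 2 = j c₁)
    (ξ₁ ξ₂ : AlgebraicClosure (RatFunc (AlgebraicClosure (ZMod p))))
    (hξ₁ : ξ₁ ^ 2 = j (c (n - 1)) - (j γ - s))
    (hξ₂ : ξ₂ ^ 2 = j (c (n - 1)) - (j γ + s)) :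
    ξ₁ ∉ IntermediateField.adjoin (RatFunc (AlgebraicClosure (ZMod p))) {s} ∧
    ξ₂ ∉ IntermediateField.adjoin (RatFunc (AlgebraicClosure (ZMod p))) {s} := by
  have hp : p.Prime := Fact.out
  -- characteristic facts
  have h2K : (2 : AlgebraicClosure (ZMod p)) ≠ 0 := by
    intro h
    have h' : ((2 : ℕ) : AlgebraicClosure (ZMod p)) = 0 := by exact_mod_cast h
    rw [CharP.cast_eq_zero_iff (AlgebraicClosure (ZMod p)) p] at h'
    exact hodd ((Nat.prime_dvd_prime_iff_eq hp Nat.prime_two).mp h')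
  obtain ⟨hcnval, hnsqn⟩ := aux_nonsquare h2K γ c₁ hc₁ hiso c hcn n hn hbig
  -- non-squares in the rational function field
  have hF1 := aux_not_square_ratfunc hnsq
  have hFn := aux_not_square_ratfunc hnsqn
  set ι : Polynomial (AlgebraicClosure (ZMod p)) →+*
      RatFunc (AlgebraicClosure (ZMod p)) :=
    algebraMap (Polynomial (AlgebraicClosure (ZMod p)))
      (RatFunc (AlgebraicClosure (ZMod p))) with hι
  set σ : RatFunc (AlgebraicClosure (ZMod p)) →+*
      AlgebraicClosure (RatFunc (AlgebraicClosure (ZMod p))) :=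
    algebraMap (RatFunc (AlgebraicClosure (ZMod p)))
      (AlgebraicClosure (RatFunc (AlgebraicClosure (ZMod p)))) with hσ
  have hjq : ∀ q, j q = σ (ι q) := by intro q; rw [hj]; rfl
  set A := ι (c (n-1) - γ) with hA
  have h2' : ¬ ∃ x : RatFunc (AlgebraicClosure (ZMod p)),
      x ^ 2 = A ^ 2 - ι c₁ := by
    rintro ⟨x, hx⟩
    refine hFn ⟨x, ?_⟩
    rw [hx, hcnval, map_sub, map_pow, ← hA]
  have hs' : s ^ 2 = σ (ι c₁) := by rw [hs, hjq]
  have hσA : σ A = j (c (n-1)) - j γ := by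
    rw [hA, map_sub, map_sub, ← hjq, ← hjq]
  constructor
  · refine aux_adjoin_arg (ι c₁) A hF1 h2' s hs' ξ₁ 1 (by norm_num) ?_
    rw [hξ₁, hσA, map_one, one_mul]
    ring
  · refine aux_adjoin_arg (ι c₁) A hF1 h2' s hs' ξ₂ (-1) (by norm_num) ?_
    rw [hξ₂, hσA, map_neg, map_one]
    ring
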